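/- arXiv:2005.07556 — 8 statements merged into one kernel-verified Lean document; each statement's English description precedes it below -/
import Mathlib

section
/- If X = (X₁,…,X_d) is a strict row contraction of n×n complex matrices, then the spectral radius of T = Σᵢ₌₁^d conj(Xᵢ) ⊗ Xᵢ ∈ M_{n²}(ℂ) is strictly less than 1; in particular I_{n²} − Σᵢ₌₁^d conj(Xᵢ) ⊗ Xᵢ is invertible. -/
/-!
Common definitions: the ψ-involution, `vec`, the elementary Pick matrix, the Choi matrix,
Kronecker-product helpers with right-associated index types, the boomerang matrices, the
commutation matrix, and the Moore–Penrose predicate.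
-/

open Matrix Filter
open scoped Kronecker Matrix.Norms.L2Operator ComplexOrder

noncomputable section

/-- Square `n × n` complex matrices. -/
abbrev Mat (n : ℕ) := Matrix (Fin n) (Fin n) ℂ

/-- Entrywise complex conjugate of a matrix. -/
def conjM {m k : Type*} (A : Matrix m k ℂ) : Matrix m k ℂ := A.map (starRingEnd ℂ)

/-- `vec A` stacks the columns of `A`: the slot `(j, i)` (column `j`, row `i`) holds `A i j`. -/
def vecM (n : ℕ) (A : Mat n) : Matrix (Fin n × Fin n) Unit ℂ := Matrix.of fun p _ => A p.2 p.1

/-- The `ψ`-involution on `M_{n²}(ℂ)`: the linear map determined on matrix units by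
`ψ(E_{ij} ⊗ E_{kℓ}) = E_{ℓj} ⊗ E_{ki}`, equivalently `ψ(A ⊗ B) = vec(B)·vec(A)ᵀ`. -/
def psi (n : ℕ) (U : Matrix (Fin n × Fin n) (Fin n × Fin n) ℂ) :
    Matrix (Fin n × Fin n) (Fin n × Fin n) ℂ :=
  Matrix.of fun p q => U (q.2, p.2) (q.1, p.1)

/-- `X` is a strict row contraction: `‖Σᵢ Xᵢ Xᵢ*‖ < 1` in the L² operator norm. -/
def StrictRowContraction {n : ℕ} {ι : Type*} [Fintype ι] (X : ι → Mat n) : Prop :=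
  ‖∑ i, X i * (X i)ᴴ‖ < 1

/-- The elementary Pick matrix `P_X = ψ((I_{n²} − Σᵢ conj(Xᵢ) ⊗ Xᵢ)⁻¹)`. -/
def pick {n : ℕ} {ι : Type*} [Fintype ι] (X : ι → Mat n) :
    Matrix (Fin n × Fin n) (Fin n × Fin n) ℂ :=
  psi n ((1 - ∑ i, conjM (X i) ⊗ₖ X i)⁻¹)

/-- The Choi matrix `𝔠_n = Σ_{i,j} E_{ij} ⊗ E_{ij} ∈ M_{n²}(ℂ)`. -/
def choiM (n : ℕ) : Matrix (Fin n × Fin n) (Fin n × Fin n) ℂ :=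
  ∑ i : Fin n, ∑ j : Fin n, single i j (1 : ℂ) ⊗ₖ single i j (1 : ℂ)

/-- `X^w = X_{i₁} ⋯ X_{i_k}` for a word `w = i₁⋯i_k` in the free monoid. -/
def wordProd {n : ℕ} {ι : Type*} (X : ι → Mat n) (w : List ι) : Mat n := (w.map X).prod

/-- Kronecker product `A ⊗ C` where `A` carries a product index, with the resulting
index types flattened right-associatively (`(a × b) × c ↦ a × (b × c)`). -/
def krA {a b c a' b' c' : Type*} (A : Matrix (a × b) (a' × b') ℂ) (C : Matrix c c' ℂ) :
    Matrix (a × b × c) (a' × b' × c') ℂ :=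
  Matrix.of fun p q => A (p.1, p.2.1) (q.1, q.2.1) * C p.2.2 q.2.2

/-- Kronecker product `M ⊗ C` where `M` carries a triple product index, flattened
right-associatively. -/
def krT {a b c e a' b' c' e' : Type*} (M : Matrix (a × b × c) (a' × b' × c') ℂ)
    (C : Matrix e e' ℂ) : Matrix (a × b × c × e) (a' × b' × c' × e') ℂ :=
  Matrix.of fun p q => M (p.1, p.2.1, p.2.2.1) (q.1, q.2.1, q.2.2.1) * C p.2.2.2 q.2.2.2

/-- Triple Kronecker product `A ⊗ B ⊗ C` with right-associated index types. -/
def kr3 {a b c a' b' c' : Type*} (A : Matrix a a' ℂ) (B : Matrix b b' ℂ) (C : Matrix c c' ℂ) :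
    Matrix (a × b × c) (a' × b' × c') ℂ :=
  Matrix.of fun p q => A p.1 q.1 * B p.2.1 q.2.1 * C p.2.2 q.2.2

/-- The boomerang matrix `B̆ = Σ_{i,j} e_i ⊗ e_j ⊗ E_{ij} ∈ M_{n³×n}(ℂ)`:
its entry at row `(i, j, k)`, column `ℓ` is `δ_{k i} δ_{ℓ j}`. -/
def boom (n : ℕ) : Matrix (Fin n × Fin n × Fin n) (Fin n) ℂ :=
  Matrix.of fun p l => if p.2.2 = p.1 ∧ l = p.2.1 then 1 else 0

/-- The commutation (permutation) matrix `Q_{n,r}`, satisfying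
`Q_{n,r} (U ⊗ V) Q_{n,r}ᵀ = V ⊗ U` for `U ∈ M_n`, `V ∈ M_r`. -/
def commMat (n r : ℕ) : Matrix (Fin r × Fin n) (Fin n × Fin r) ℂ :=
  Matrix.of fun p q => if p.2 = q.1 ∧ p.1 = q.2 then 1 else 0

/-- `Σ_{i,j} e_i ⊗ e_j ⊗ I_r ⊗ E_{ij}`: its entry at row `(i, j, a, k)`, column `(b, ℓ)`
is `δ_{k i} δ_{ℓ j} δ_{a b}`. -/
def preBoom (n r : ℕ) : Matrix (Fin n × Fin n × Fin r × Fin n) (Fin r × Fin n) ℂ :=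
  Matrix.of fun p q => if p.2.2.2 = p.1 ∧ q.2 = p.2.1 ∧ p.2.2.1 = q.1 then 1 else 0

/-- The ampliated boomerang matrix `B̆_r = (Σ_{i,j} e_i ⊗ e_j ⊗ I_r ⊗ E_{ij}) · Q_{n,r}`. -/
def boomAmp (n r : ℕ) : Matrix (Fin n × Fin n × Fin r × Fin n) (Fin n × Fin r) ℂ :=
  preBoom n r * commMat n r

/-- `B` is the Moore–Penrose pseudoinverse of `A` (the four Penrose conditions). -/
structure IsMoorePenroseInv {m k : Type*} [Fintype m] [Fintype k]
    (A : Matrix m k ℂ) (B : Matrix k m ℂ) : Prop where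
  mul_inv_mul : A * B * A = A
  inv_mul_inv : B * A * B = B
  hermitian_mul_inv : (A * B)ᴴ = A * B
  hermitian_inv_mul : (B * A)ᴴ = B * A

/-- The L² operator norm of `1 ⊗ₖ V` is at most `‖V‖`. -/
lemma one_kron_l2_opNorm_le {d n : ℕ} (V : Mat n) :
    ‖(1 : Matrix (Fin d) (Fin d) ℂ) ⊗ₖ V‖ ≤ ‖V‖ := by
  rw [Matrix.l2_opNorm_def]
  refine ContinuousLinearMap.opNorm_le_bound _ (norm_nonneg V) fun x => ?_
  show ‖Matrix.toEuclideanLin ((1 : Matrix (Fin d) (Fin d) ℂ) ⊗ₖ V) x‖ ≤ ‖V‖ * ‖x‖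
  set y := Matrix.toEuclideanLin ((1 : Matrix (Fin d) (Fin d) ℂ) ⊗ₖ V) x with hy
  have hyp : ∀ p : Fin d × Fin n, y p = ∑ k', V p.2 k' * x (p.1, k') := by
    intro p
    simp only [hy, Matrix.toEuclideanLin_apply, Matrix.mulVec, dotProduct]
    show ∑ q : Fin d × Fin n,
        ((1 : Matrix (Fin d) (Fin d) ℂ) ⊗ₖ V) p q * x q = _
    rw [Fintype.sum_prod_type]
    simp [Matrix.kroneckerMap_apply, Matrix.one_apply, ite_mul, Finset.sum_ite_eq]
  -- blockwise vectors
  set z : Fin d → EuclideanSpace ℂ (Fin n) := fun i =>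
    (WithLp.equiv 2 (Fin n → ℂ)).symm (V *ᵥ fun k => x (i, k)) with hz
  set w : Fin d → EuclideanSpace ℂ (Fin n) := fun i =>
    (WithLp.equiv 2 (Fin n → ℂ)).symm (fun k => x (i, k)) with hw
  have hzle : ∀ i, ‖z i‖ ≤ ‖V‖ * ‖w i‖ := fun i => Matrix.l2_opNorm_mulVec V (w i)
  have hysq : ‖y‖ ^ 2 = ∑ i : Fin d, ‖z i‖ ^ 2 := by
    rw [EuclideanSpace.norm_eq, Real.sq_sqrt (by positivity), Fintype.sum_prod_type]
    refine Finset.sum_congr rfl fun i _ => ?_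
    rw [EuclideanSpace.norm_eq, Real.sq_sqrt (by positivity)]
    refine Finset.sum_congr rfl fun k _ => ?_
    congr 1
    rw [hyp]
    rfl
  have hxsq : ‖x‖ ^ 2 = ∑ i : Fin d, ‖w i‖ ^ 2 := by
    rw [EuclideanSpace.norm_eq, Real.sq_sqrt (by positivity), Fintype.sum_prod_type]
    refine Finset.sum_congr rfl fun i _ => ?_
    rw [EuclideanSpace.norm_eq, Real.sq_sqrt (by positivity)]
    rfl
  have key : ‖y‖ ^ 2 ≤ (‖V‖ * ‖x‖) ^ 2 := by
    rw [hysq, mul_pow, hxsq, Finset.mul_sum]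
    refine Finset.sum_le_sum fun i _ => ?_
    rw [← mul_pow]
    exact pow_le_pow_left₀ (norm_nonneg _) (hzle i) 2
  exact le_of_pow_le_pow_left₀ two_ne_zero (by positivity) key

/-- If `X = (X₁,…,X_d)` is a strict row contraction of `n×n` complex
matrices, then the spectral radius of `T = Σᵢ conj(Xᵢ) ⊗ Xᵢ` is strictly less than `1`;
in particular `I_{n²} − Σᵢ conj(Xᵢ) ⊗ Xᵢ` is invertible. -/
theorem spectralRadius_lt_one_of_strictRowContraction {n d : ℕ} (X : Fin d → Mat n)
    (hX : StrictRowContraction X) :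
    spectralRadius ℂ (∑ i, conjM (X i) ⊗ₖ X i) < 1 ∧
      IsUnit ((1 : Matrix (Fin n × Fin n) (Fin n × Fin n) ℂ) - ∑ i, conjM (X i) ⊗ₖ X i) := by
  classical
  set T : Matrix (Fin n × Fin n) (Fin n × Fin n) ℂ := ∑ i, conjM (X i) ⊗ₖ X i with hT
  set S : Mat n := ∑ i, X i * (X i)ᴴ with hS
  have hSnorm : ‖S‖ < 1 := hX
  -- every spectral value of T has norm at most ‖S‖
  have hbound : ∀ μ ∈ spectrum ℂ T, ‖μ‖ ≤ ‖S‖ := by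
    intro μ hμ
    rw [spectrum.mem_iff, Matrix.isUnit_iff_isUnit_det, isUnit_iff_ne_zero, not_not] at hμ
    obtain ⟨v, hv0, hv⟩ := (Matrix.exists_mulVec_eq_zero_iff).2 hμ
    have hev : T *ᵥ v = μ • v := by
      rw [Matrix.sub_mulVec] at hv
      have h2 : (algebraMap ℂ (Matrix (Fin n × Fin n) (Fin n × Fin n) ℂ) μ) *ᵥ v = μ • v := by
        rw [Algebra.algebraMap_eq_smul_one, Matrix.smul_mulVec, Matrix.one_mulVec]
      rw [h2, sub_eq_zero] at hv
      exact hv.symm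
    set V : Mat n := Matrix.of fun a b => v (b, a) with hV
    have hVne : V ≠ 0 := by
      intro h
      apply hv0
      funext p
      have := congrFun (congrFun h p.2) p.1
      simpa [hV] using this
    have hVpos : 0 < ‖V‖ := norm_pos_iff.2 hVne
    -- the eigen-equation in matrix form
    have hΦ : ∑ i, X i * V * (X i)ᴴ = μ • V := by
      ext a b
      have h1 := congrFun hev (b, a)
      simp only [Matrix.mulVec, dotProduct, hT, Matrix.sum_apply,
        Matrix.kroneckerMap_apply, Pi.smul_apply, smul_eq_mul] at h1
      rw [Fintype.sum_prod_type] at h1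
      simp only [Finset.sum_mul] at h1
      simp only [Matrix.sum_apply, Matrix.mul_apply, Matrix.conjTranspose_apply,
        Matrix.smul_apply, smul_eq_mul, Finset.sum_mul]
      simp only [hV, Matrix.of_apply]
      rw [← h1, Finset.sum_comm]
      refine Finset.sum_congr rfl fun k' _ => ?_
      rw [Finset.sum_comm]
      refine Finset.sum_congr rfl fun j _ => ?_
      refine Finset.sum_congr rfl fun i _ => ?_
      simp only [conjM, Matrix.map_apply, starRingEnd_apply]
      ring
    -- block row matrix
    set R : Matrix (Fin n) (Fin d × Fin n) ℂ := Matrix.of fun j p => X p.1 j p.2 with hR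
    have hRR : R * Rᴴ = S := by
      ext j j'
      simp only [Matrix.mul_apply, Matrix.conjTranspose_apply, hR, Matrix.of_apply, hS,
        Matrix.sum_apply]
      rw [Fintype.sum_prod_type]
    have hRVR : R * ((1 : Matrix (Fin d) (Fin d) ℂ) ⊗ₖ V) * Rᴴ = ∑ i, X i * V * (X i)ᴴ := by
      ext a b
      simp only [Matrix.mul_apply, Matrix.conjTranspose_apply, hR, Matrix.of_apply,
        Matrix.sum_apply, Matrix.kroneckerMap_apply, Matrix.one_apply]
      rw [Fintype.sum_prod_type]
      refine Finset.sum_congr rfl fun i _ => ?_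
      refine Finset.sum_congr rfl fun k' _ => ?_
      congr 1
      rw [Fintype.sum_prod_type]
      simp [ite_mul, mul_ite, mul_zero, zero_mul, Finset.sum_ite_eq, Finset.sum_ite_eq']
    have hnormR : ‖R‖ * ‖R‖ = ‖S‖ := by
      have := Matrix.l2_opNorm_conjTranspose_mul_self (Rᴴ)
      rw [Matrix.conjTranspose_conjTranspose, hRR, Matrix.l2_opNorm_conjTranspose] at this
      exact this.symm
    have hchain : ‖μ‖ * ‖V‖ ≤ ‖S‖ * ‖V‖ := by
      calc ‖μ‖ * ‖V‖ = ‖μ • V‖ := (norm_smul μ V).symm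
        _ = ‖R * ((1 : Matrix (Fin d) (Fin d) ℂ) ⊗ₖ V) * Rᴴ‖ := by rw [hRVR, hΦ]
        _ ≤ ‖R * ((1 : Matrix (Fin d) (Fin d) ℂ) ⊗ₖ V)‖ * ‖Rᴴ‖ := Matrix.l2_opNorm_mul _ _
        _ ≤ (‖R‖ * ‖(1 : Matrix (Fin d) (Fin d) ℂ) ⊗ₖ V‖) * ‖Rᴴ‖ := by
            gcongr
            exact Matrix.l2_opNorm_mul _ _
        _ ≤ (‖R‖ * ‖V‖) * ‖Rᴴ‖ := by
            gcongr
            exact one_kron_l2_opNorm_le V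
        _ = ‖S‖ * ‖V‖ := by rw [Matrix.l2_opNorm_conjTranspose, ← hnormR]; ring
    exact le_of_mul_le_mul_right hchain hVpos
  have hrad : spectralRadius ℂ T ≤ (‖S‖₊ : ENNReal) := by
    rw [spectralRadius]
    exact iSup₂_le fun μ hμ => by
      exact_mod_cast ENNReal.coe_le_coe.2 (by exact_mod_cast hbound μ hμ)
  have hS1 : (‖S‖₊ : ENNReal) < 1 := by
    rw [← ENNReal.coe_one, ENNReal.coe_lt_coe]
    exact_mod_cast hSnorm
  refine ⟨lt_of_le_of_lt hrad hS1, ?_⟩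
  have hone : (1 : ℂ) ∉ spectrum ℂ T := by
    intro h
    have := hbound 1 h
    simp only [norm_one] at this
    exact absurd (lt_of_le_of_lt this hSnorm) (lt_irrefl 1)
  have := spectrum.notMem_iff.mp hone
  rwa [_root_.map_one] at this
end
end

section
/- Let X = (X₁,…,X_d) be a strict row contraction of n×n complex matrices. Then the family indexed by words w in the free monoid on {1,…,d} given by w ↦ (I_n ⊗ X^w)·𝔠_n·(I_n ⊗ X^w)* is summable in M_{n²}(ℂ), and Σ_w (I_n ⊗ X^w)·𝔠_n·(I_n ⊗ X^w)* = P_X. -/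
/-!
Common definitions: the ψ-involution, `vec`, the elementary Pick matrix, the Choi matrix,
Kronecker-product helpers with right-associated index types, the boomerang matrices, the
commutation matrix, and the Moore–Penrose predicate.
-/

open Matrix Filter
open scoped Kronecker Matrix.Norms.L2Operator ComplexOrder

noncomputable section

section PickAux

open Matrix
open scoped Kronecker Matrix.Norms.L2Operator ComplexOrder

variable {n d : ℕ}

/-- Squared ℓ² norm of a vector. -/
def nsqV {n : ℕ} (v : Fin n → ℂ) : ℝ := ∑ a, Complex.normSq (v a)

lemma nsqV_nonneg {n : ℕ} (v : Fin n → ℂ) : 0 ≤ nsqV v :=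
  Finset.sum_nonneg fun _ _ => Complex.normSq_nonneg _

lemma term_eq_psi (A : Mat n) :
    ((1 : Mat n) ⊗ₖ A) * choiM n * ((1 : Mat n) ⊗ₖ A)ᴴ = psi n (conjM A ⊗ₖ A) := by
  ext ⟨p1, p2⟩ ⟨q1, q2⟩
  simp [choiM, psi, conjM, Matrix.mul_apply, Matrix.kroneckerMap_apply,
    Matrix.one_apply, Matrix.conjTranspose_apply, Fintype.sum_prod_type,
    Matrix.single, Matrix.sum_apply, Finset.sum_ite_eq, Finset.sum_ite_eq',
    ite_and, mul_comm, apply_ite (starRingEnd ℂ)]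

lemma star_dot_self (w : Fin n → ℂ) :
    star w ⬝ᵥ w = (nsqV w : ℂ) := by
  simp [dotProduct, nsqV, Pi.star_apply, mul_comm, Complex.mul_conj]

lemma nsqV_conjT_mulVec (A : Mat n) (v : Fin n → ℂ) :
    (nsqV (Aᴴ *ᵥ v) : ℂ) = star v ⬝ᵥ ((A * Aᴴ) *ᵥ v) := by
  rw [← star_dot_self]
  rw [← Matrix.mulVec_mulVec, dotProduct_mulVec (star v) A]
  congr 1
  have := Matrix.star_mulVec (Aᴴ) v
  simpa using this

lemma norm_sq_eq_nsqV (v : Fin n → ℂ) :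
    ‖(WithLp.equiv 2 (Fin n → ℂ)).symm v‖ ^ 2 = nsqV v := by
  rw [EuclideanSpace.norm_eq, Real.sq_sqrt (by positivity)]
  simp [nsqV, Complex.sq_norm]

lemma sum_mulVec' {ι : Type*} (s : Finset ι) (A : ι → Mat n) (v : Fin n → ℂ) :
    (∑ i ∈ s, A i) *ᵥ v = ∑ i ∈ s, (A i *ᵥ v) := by
  ext a
  simp [Matrix.mulVec, dotProduct, Matrix.sum_apply, Finset.sum_mul]
  rw [Finset.sum_comm]

lemma dot_sum' {ι : Type*} (s : Finset ι) (v : Fin n → ℂ) (w : ι → Fin n → ℂ) :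
    v ⬝ᵥ (∑ i ∈ s, w i) = ∑ i ∈ s, v ⬝ᵥ w i := by
  simp [dotProduct, Finset.mul_sum, Finset.sum_apply]
  rw [Finset.sum_comm]

lemma row_step (X : Fin d → Mat n) (v : Fin n → ℂ) :
    ∑ i, nsqV ((X i)ᴴ *ᵥ v) ≤ ‖∑ i, X i * (X i)ᴴ‖ * nsqV v := by
  classical
  set M : Mat n := ∑ i, X i * (X i)ᴴ with hM
  have hcast : ((∑ i, nsqV ((X i)ᴴ *ᵥ v) : ℝ) : ℂ) = star v ⬝ᵥ (M *ᵥ v) := by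
    push_cast
    rw [hM, sum_mulVec', dot_sum']
    exact Finset.sum_congr rfl fun i _ => nsqV_conjT_mulVec (X i) v
  have hre : (∑ i, nsqV ((X i)ᴴ *ᵥ v)) = (star v ⬝ᵥ (M *ᵥ v)).re := by
    rw [← hcast]; simp
  rw [hre]
  set ve : EuclideanSpace ℂ (Fin n) := (WithLp.equiv 2 (Fin n → ℂ)).symm v with hve
  have hinner : star v ⬝ᵥ (M *ᵥ v) =
      inner ℂ ve ((EuclideanSpace.equiv (Fin n) ℂ).symm (M *ᵥ v)) := by
    rw [EuclideanSpace.inner_eq_star_dotProduct, dotProduct_comm]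
    rfl
  rw [hinner]
  calc (inner ℂ ve ((EuclideanSpace.equiv (Fin n) ℂ).symm (M *ᵥ v)) : ℂ).re
      ≤ ‖(inner ℂ ve ((EuclideanSpace.equiv (Fin n) ℂ).symm (M *ᵥ v)) : ℂ)‖ :=
        Complex.re_le_norm _
    _ ≤ ‖ve‖ * ‖(EuclideanSpace.equiv (Fin n) ℂ).symm (M *ᵥ v)‖ := norm_inner_le_norm _ _
    _ ≤ ‖ve‖ * (‖M‖ * ‖ve‖) := by
        refine mul_le_mul_of_nonneg_left ?_ (norm_nonneg _)
        exact Matrix.l2_opNorm_mulVec M ve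
    _ = ‖M‖ * ‖ve‖ ^ 2 := by ring
    _ = ‖M‖ * nsqV v := by rw [hve, norm_sq_eq_nsqV]

lemma wordProd_nil (X : Fin d → Mat n) : wordProd X ([] : List (Fin d)) = 1 := rfl

lemma wordProd_cons (X : Fin d → Mat n) (i : Fin d) (w : List (Fin d)) :
    wordProd X (i :: w) = X i * wordProd X w := by
  simp [wordProd]

lemma key_bound (X : Fin d → Mat n) :
    ∀ (k : ℕ) (v : Fin n → ℂ),
      ∑ f : Fin k → Fin d, nsqV ((wordProd X (List.ofFn f))ᴴ *ᵥ v)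
        ≤ ‖∑ i, X i * (X i)ᴴ‖ ^ k * nsqV v := by
  intro k
  induction k with
  | zero =>
    intro v
    simp [wordProd_nil, Matrix.one_mulVec]
  | succ k ih =>
    intro v
    set c := ‖∑ i, X i * (X i)ᴴ‖ with hc
    have hc0 : 0 ≤ c := norm_nonneg _
    rw [← (Fin.consEquiv (fun _ : Fin (k+1) => Fin d)).sum_comp]
    rw [Fintype.sum_prod_type]
    have hterm : ∀ (i : Fin d) (g : Fin k → Fin d),
        nsqV ((wordProd X (List.ofFn ((Fin.consEquiv (fun _ : Fin (k+1) => Fin d)) (i, g))))ᴴ *ᵥ v)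
          = nsqV ((wordProd X (List.ofFn g))ᴴ *ᵥ ((X i)ᴴ *ᵥ v)) := by
      intro i g
      have hl : List.ofFn ((Fin.consEquiv (fun _ : Fin (k+1) => Fin d)) (i, g)) = i :: List.ofFn g := by
        simp [Fin.consEquiv, List.ofFn_succ]
      rw [hl, wordProd_cons, Matrix.conjTranspose_mul, ← Matrix.mulVec_mulVec]
    calc ∑ i, ∑ g : Fin k → Fin d,
          nsqV ((wordProd X (List.ofFn ((Fin.consEquiv (fun _ : Fin (k+1) => Fin d)) (i, g))))ᴴ *ᵥ v)
        = ∑ i, ∑ g : Fin k → Fin d,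
            nsqV ((wordProd X (List.ofFn g))ᴴ *ᵥ ((X i)ᴴ *ᵥ v)) := by
          exact Finset.sum_congr rfl fun i _ => Finset.sum_congr rfl fun g _ => hterm i g
      _ ≤ ∑ i, c ^ k * nsqV ((X i)ᴴ *ᵥ v) :=
          Finset.sum_le_sum fun i _ => ih ((X i)ᴴ *ᵥ v)
      _ = c ^ k * ∑ i, nsqV ((X i)ᴴ *ᵥ v) := by rw [Finset.mul_sum]
      _ ≤ c ^ k * (c * nsqV v) :=
          mul_le_mul_of_nonneg_left (row_step X v) (pow_nonneg hc0 k)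
      _ = c ^ (k + 1) * nsqV v := by ring

lemma entry_sq_bound (X : Fin d → Mat n) (k : ℕ) (a b : Fin n) :
    ∑ f : Fin k → Fin d, Complex.normSq (wordProd X (List.ofFn f) a b)
      ≤ ‖∑ i, X i * (X i)ᴴ‖ ^ k := by
  classical
  have h := key_bound X k (Pi.single a 1)
  have hv : nsqV (Pi.single a (1:ℂ) : Fin n → ℂ) = 1 := by
    simp [nsqV, Pi.single_apply, apply_ite Complex.normSq, Finset.sum_ite_eq']
  rw [hv, mul_one] at h
  refine le_trans (Finset.sum_le_sum fun f _ => ?_) h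
  have hmv : ∀ (A : Mat n) (b' : Fin n),
      (Aᴴ *ᵥ (Pi.single a (1:ℂ))) b' = (starRingEnd ℂ) (A a b') := by
    intro A b'
    simp [Matrix.mulVec, dotProduct, Matrix.conjTranspose_apply, Pi.single_apply]
  have : nsqV ((wordProd X (List.ofFn f))ᴴ *ᵥ (Pi.single a 1)) =
      ∑ b' : Fin n, Complex.normSq (wordProd X (List.ofFn f) a b') := by
    unfold nsqV
    refine Finset.sum_congr rfl fun b' _ => ?_
    rw [hmv]
    simp
  rw [this]
  exact Finset.single_le_sum (fun b' _ => Complex.normSq_nonneg _) (Finset.mem_univ b)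

lemma stdBasis_norm_le_one {m k : Type*} [Fintype m] [Fintype k] [DecidableEq m] [DecidableEq k]
    (p : m) (q : k) : ‖(single p q (1:ℂ) : Matrix m k ℂ)‖ ≤ 1 := by
  have hD : (single q q (1:ℂ) : Matrix k k ℂ) * single q q (1:ℂ)
      = single q q (1:ℂ) := by
    rw [Matrix.single_mul_single_same]; norm_num
  have hDH : (single q q (1:ℂ) : Matrix k k ℂ)ᴴ = single q q (1:ℂ) := by
    ext a b
    by_cases h1 : q = a <;> by_cases h2 : q = b <;>
      simp [Matrix.conjTranspose_apply, Matrix.single, h1, h2]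
  have hDnorm : ‖(single q q (1:ℂ) : Matrix k k ℂ)‖ ≤ 1 := by
    have h2 : ‖(single q q (1:ℂ) : Matrix k k ℂ)‖ * ‖(single q q (1:ℂ) : Matrix k k ℂ)‖
        = ‖(single q q (1:ℂ) : Matrix k k ℂ)‖ := by
      rw [← Matrix.l2_opNorm_conjTranspose_mul_self, hDH, hD]
    nlinarith [norm_nonneg (single q q (1:ℂ) : Matrix k k ℂ)]
  have hEH : (single p q (1:ℂ) : Matrix m k ℂ)ᴴ * single p q (1:ℂ)
      = single q q (1:ℂ) := by
    ext a b
    by_cases h1 : q = a <;> by_cases h2 : q = b <;>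
      simp [Matrix.mul_apply, Matrix.conjTranspose_apply, Matrix.single, ite_and, h1, h2]
  have hsq : ‖(single p q (1:ℂ) : Matrix m k ℂ)‖ * ‖(single p q (1:ℂ) : Matrix m k ℂ)‖ ≤ 1 := by
    rw [← Matrix.l2_opNorm_conjTranspose_mul_self, hEH]
    exact hDnorm
  nlinarith [norm_nonneg (single p q (1:ℂ) : Matrix m k ℂ)]

lemma opNorm_le_sum_abs {m k : Type*} [Fintype m] [Fintype k] [DecidableEq m] [DecidableEq k]
    (A : Matrix m k ℂ) : ‖A‖ ≤ ∑ p : m, ∑ q : k, ‖A p q‖ := by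
  conv_lhs => rw [Matrix.matrix_eq_sum_single A]
  refine le_trans (norm_sum_le _ _) (Finset.sum_le_sum fun p _ => ?_)
  refine le_trans (norm_sum_le _ _) (Finset.sum_le_sum fun q _ => ?_)
  have : (single p q (A p q) : Matrix m k ℂ) = A p q • single p q (1:ℂ) := by
    simp [Matrix.smul_single]
  rw [this, norm_smul]
  calc ‖A p q‖ * ‖(single p q (1:ℂ) : Matrix m k ℂ)‖
      ≤ ‖A p q‖ * 1 := mul_le_mul_of_nonneg_left (stdBasis_norm_le_one p q) (norm_nonneg _)
    _ = ‖A p q‖ := by rw [mul_one]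

/-- The family `w ↦ conj(X^w) ⊗ X^w`. -/
def Ff (X : Fin d → Mat n) (w : List (Fin d)) : Matrix (Fin n × Fin n) (Fin n × Fin n) ℂ :=
  conjM (wordProd X w) ⊗ₖ wordProd X w

lemma conjM_one : conjM (1 : Mat n) = 1 := by
  ext a b
  by_cases h : a = b <;> simp [conjM, Matrix.one_apply, h]

lemma conjM_mul (A B : Mat n) : conjM (A * B) = conjM A * conjM B := by
  simp [conjM, Matrix.map_mul]

lemma Ff_nil (X : Fin d → Mat n) : Ff X [] = 1 := by
  rw [Ff, wordProd_nil, conjM_one, Matrix.one_kronecker_one]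

lemma Ff_cons (X : Fin d → Mat n) (i : Fin d) (w : List (Fin d)) :
    Ff X (i :: w) = (conjM (X i) ⊗ₖ X i) * Ff X w := by
  rw [Ff, wordProd_cons, conjM_mul, Matrix.mul_kronecker_mul, Ff]

lemma pow_expand (X : Fin d → Mat n) (k : ℕ) :
    ∑ f : Fin k → Fin d, Ff X (List.ofFn f) = (∑ i, conjM (X i) ⊗ₖ X i) ^ k := by
  induction k with
  | zero => simp [List.ofFn_zero, Ff_nil]
  | succ k ih =>
    rw [← (Fin.consEquiv (fun _ : Fin (k+1) => Fin d)).sum_comp, Fintype.sum_prod_type]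
    have hterm : ∀ (i : Fin d) (g : Fin k → Fin d),
        Ff X (List.ofFn ((Fin.consEquiv (fun _ : Fin (k+1) => Fin d)) (i, g)))
          = (conjM (X i) ⊗ₖ X i) * Ff X (List.ofFn g) := by
      intro i g
      have hl : List.ofFn ((Fin.consEquiv (fun _ : Fin (k+1) => Fin d)) (i, g)) = i :: List.ofFn g := by
        simp [Fin.consEquiv, List.ofFn_succ]
      rw [hl, Ff_cons]
    calc ∑ i, ∑ g : Fin k → Fin d, Ff X (List.ofFn ((Fin.consEquiv (fun _ : Fin (k+1) => Fin d)) (i, g)))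
        = ∑ i, ∑ g : Fin k → Fin d, (conjM (X i) ⊗ₖ X i) * Ff X (List.ofFn g) :=
          Finset.sum_congr rfl fun i _ => Finset.sum_congr rfl fun g _ => hterm i g
      _ = ∑ i, (conjM (X i) ⊗ₖ X i) * ∑ g : Fin k → Fin d, Ff X (List.ofFn g) := by
          exact Finset.sum_congr rfl fun i _ => (Finset.mul_sum _ _ _).symm
      _ = (∑ i, conjM (X i) ⊗ₖ X i) * ∑ g : Fin k → Fin d, Ff X (List.ofFn g) := by
          rw [Finset.sum_mul]
      _ = (∑ i, conjM (X i) ⊗ₖ X i) ^ (k + 1) := by rw [ih, pow_succ']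

lemma normFf_le (X : Fin d → Mat n) (k : ℕ) :
    ∑ f : Fin k → Fin d, ‖Ff X (List.ofFn f)‖ ≤ (n : ℝ) ^ 4 * ‖∑ i, X i * (X i)ᴴ‖ ^ k := by
  classical
  set c := ‖∑ i, X i * (X i)ᴴ‖ with hc
  have hc0 : 0 ≤ c := norm_nonneg _
  have hck : 0 ≤ c ^ k := pow_nonneg hc0 k
  have hentry : ∀ (p q : Fin n × Fin n),
      ∑ f : Fin k → Fin d, ‖Ff X (List.ofFn f) p q‖ ≤ c ^ k := by
    rintro ⟨p1, p2⟩ ⟨q1, q2⟩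
    have hle : ∀ f : Fin k → Fin d,
        ‖Ff X (List.ofFn f) (p1, p2) (q1, q2)‖
          ≤ (Complex.normSq (wordProd X (List.ofFn f) p1 q1)
              + Complex.normSq (wordProd X (List.ofFn f) p2 q2)) / 2 := by
      intro f
      set W := wordProd X (List.ofFn f)
      have h1 : ‖Ff X (List.ofFn f) (p1, p2) (q1, q2)‖
          = ‖W p1 q1‖ * ‖W p2 q2‖ := by
        simp [Ff, conjM, Matrix.kroneckerMap_apply, Matrix.map_apply, _root_.map_mul,
          Complex.norm_conj]
        rfl
      rw [h1]
      have h2 := Complex.sq_norm (W p1 q1)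
      have h3 := Complex.sq_norm (W p2 q2)
      nlinarith [sq_nonneg (‖W p1 q1‖ - ‖W p2 q2‖),
        norm_nonneg (W p1 q1), norm_nonneg (W p2 q2)]
    calc ∑ f : Fin k → Fin d, ‖Ff X (List.ofFn f) (p1, p2) (q1, q2)‖
        ≤ ∑ f : Fin k → Fin d,
            (Complex.normSq (wordProd X (List.ofFn f) p1 q1)
              + Complex.normSq (wordProd X (List.ofFn f) p2 q2)) / 2 :=
          Finset.sum_le_sum fun f _ => hle f
      _ = ((∑ f : Fin k → Fin d, Complex.normSq (wordProd X (List.ofFn f) p1 q1))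
            + ∑ f : Fin k → Fin d, Complex.normSq (wordProd X (List.ofFn f) p2 q2)) / 2 := by
          rw [← Finset.sum_add_distrib, Finset.sum_div]
      _ ≤ (c ^ k + c ^ k) / 2 := by
          have := entry_sq_bound X k p1 q1
          have := entry_sq_bound X k p2 q2
          rw [← hc] at *
          linarith
      _ = c ^ k := by ring
  calc ∑ f : Fin k → Fin d, ‖Ff X (List.ofFn f)‖
      ≤ ∑ f : Fin k → Fin d, ∑ p : Fin n × Fin n, ∑ q : Fin n × Fin n,
          ‖Ff X (List.ofFn f) p q‖ :=
        Finset.sum_le_sum fun f _ => opNorm_le_sum_abs _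
    _ = ∑ p : Fin n × Fin n, ∑ f : Fin k → Fin d, ∑ q : Fin n × Fin n,
          ‖Ff X (List.ofFn f) p q‖ := Finset.sum_comm
    _ = ∑ p : Fin n × Fin n, ∑ q : Fin n × Fin n, ∑ f : Fin k → Fin d,
          ‖Ff X (List.ofFn f) p q‖ :=
        Finset.sum_congr rfl fun p _ => Finset.sum_comm
    _ ≤ ∑ _p : Fin n × Fin n, ∑ _q : Fin n × Fin n, c ^ k :=
        Finset.sum_le_sum fun p _ => Finset.sum_le_sum fun q _ => hentry p q
    _ = (n : ℝ) ^ 4 * c ^ k := by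
        simp [Finset.sum_const, Finset.card_univ]
        ring

lemma summable_norm_Ff (X : Fin d → Mat n) (hX : StrictRowContraction X) :
    Summable (fun w : List (Fin d) => ‖Ff X w‖) := by
  set c := ‖∑ i, X i * (X i)ᴴ‖ with hc
  have hc0 : 0 ≤ c := norm_nonneg _
  have hc1 : c < 1 := hX
  have hgeo : Summable (fun k : ℕ => (n : ℝ) ^ 4 * c ^ k) :=
    (summable_geometric_of_lt_one hc0 hc1).mul_left _
  have hsig : Summable (fun s : Σ k : ℕ, (Fin k → Fin d) => ‖Ff X (List.ofFn s.2)‖) := by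
    apply (summable_sigma_of_nonneg (fun _ => norm_nonneg _)).mpr
    refine ⟨fun k => Summable.of_finite, ?_⟩
    apply Summable.of_nonneg_of_le
        (fun k => tsum_nonneg fun _ => norm_nonneg _)
        (fun k => ?_) hgeo
    rw [tsum_fintype]
    exact normFf_le X k
  have hcomp : (fun w : List (Fin d) => ‖Ff X w‖) ∘ ⇑(List.equivSigmaTuple (α := Fin d)).symm
      = fun s : Σ k : ℕ, (Fin k → Fin d) => ‖Ff X (List.ofFn s.2)‖ := by
    funext s
    simp [List.equivSigmaTuple]
  refine (Equiv.summable_iff (List.equivSigmaTuple (α := Fin d)).symm).mp ?_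
  rw [hcomp]
  exact hsig

/-- `psi` as a linear map. -/
def psiLM (n : ℕ) :
    Matrix (Fin n × Fin n) (Fin n × Fin n) ℂ →ₗ[ℂ] Matrix (Fin n × Fin n) (Fin n × Fin n) ℂ where
  toFun := psi n
  map_add' := fun _ _ => rfl
  map_smul' := fun _ _ => rfl

end PickAux

/-- For a strict row contraction `X`, the family
`w ↦ (I_n ⊗ X^w)·𝔠_n·(I_n ⊗ X^w)*` indexed by words `w` in the free monoid on `{1,…,d}`
is summable, with sum the elementary Pick matrix `P_X`. -/
theorem hasSum_choi_conjugates_pick {n d : ℕ} (X : Fin d → Mat n)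
    (hX : StrictRowContraction X) :
    HasSum (fun w : List (Fin d) =>
        ((1 : Mat n) ⊗ₖ wordProd X w) * choiM n * ((1 : Mat n) ⊗ₖ wordProd X w)ᴴ)
      (pick X) := by
  classical
  set S := ∑ i, conjM (X i) ⊗ₖ X i with hS
  have hsum : Summable (fun w : List (Fin d) => Ff X w) := (summable_norm_Ff X hX).of_norm
  obtain ⟨L, hL⟩ := hsum
  have hsig : HasSum (fun s : Σ k : ℕ, (Fin k → Fin d) => Ff X (List.ofFn s.2)) L := by
    have h := (Equiv.hasSum_iff (List.equivSigmaTuple (α := Fin d)).symm).mpr hL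
    have hcomp : (fun w : List (Fin d) => Ff X w) ∘ ⇑(List.equivSigmaTuple (α := Fin d)).symm
        = fun s : Σ k : ℕ, (Fin k → Fin d) => Ff X (List.ofFn s.2) := by
      funext s
      simp [List.equivSigmaTuple]
    rwa [hcomp] at h
  have hpow : HasSum (fun k : ℕ => S ^ k) L := by
    refine HasSum.sigma hsig ?_
    intro k
    have h := hasSum_fintype (fun f : Fin k → Fin d => Ff X (List.ofFn f))
    rwa [pow_expand] at h
  have h1 : HasSum (fun k => S ^ (k + 1)) (L - 1) := by
    apply (hasSum_nat_add_iff 1).mpr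
    simpa using hpow
  have h2 : HasSum (fun k => S ^ k - S ^ (k + 1)) (L - (L - 1)) := hpow.sub h1
  have h3 : HasSum (fun k => (1 - S) * S ^ k) ((1 - S) * L) := hpow.mul_left _
  have hmul : (1 - S) * L = 1 := by
    have heq : (fun k => (1 - S) * S ^ k) = fun k => S ^ k - S ^ (k + 1) := by
      funext k; rw [sub_mul, one_mul, pow_succ']
    rw [heq] at h3
    have h4 := h3.unique h2
    rw [h4]
    exact sub_sub_cancel L 1
  have hinv : (1 - S)⁻¹ = L := Matrix.inv_eq_right_inv hmul
  have hcont : Continuous (psi n) := (psiLM n).continuous_of_finiteDimensional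
  have hψ : HasSum (fun w : List (Fin d) => psi n (Ff X w)) (psi n L) :=
    hL.map (psiLM n).toAddMonoidHom hcont
  have hfun : (fun w : List (Fin d) =>
      ((1 : Mat n) ⊗ₖ wordProd X w) * choiM n * ((1 : Mat n) ⊗ₖ wordProd X w)ᴴ)
      = fun w : List (Fin d) => psi n (Ff X w) := by
    funext w
    exact term_eq_psi (wordProd X w)
  have hpick : pick X = psi n L := by
    rw [pick, ← hS, hinv]
  rw [hfun, hpick]
  exact hψ
end
end

section
/- Let X = (X₁,…,X_d) be a strict row contraction of n×n complex matrices, let s,t ≥ 1, and let Y ∈ M_{s×t}(M_n(ℂ)) be an s×t block matrix with n×n blocks, viewed as an ns×nt matrix. Define Φ : M_n(ℂ) → M_{ns}(ℂ) by Φ(H) = (Σ_w X^w H X^{w*}) ⊗ I_s − Y·((Σ_w X^w H X^{w*}) ⊗ I_t)·Y*, the sums being over all words w in the free monoid on {1,…,d} (these series are summable). Then the Choi matrix of Φ satisfies Σ_{i,j=1}^n E_{ij} ⊗ Φ(E_{ij}) = P_X ⊗ I_s − (I_n ⊗ Y)·(P_X ⊗ I_t)·(I_n ⊗ Y*). -/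
/-!
Common definitions: the ψ-involution, `vec`, the elementary Pick matrix, the Choi matrix,
Kronecker-product helpers with right-associated index types, the boomerang matrices, the
commutation matrix, and the Moore–Penrose predicate.
-/

open Matrix Filter
open scoped Kronecker Matrix.Norms.L2Operator ComplexOrder

noncomputable section

/-- The cons equivalence between `ι × List ι` and nonempty lists. -/
def consEquiv {ι : Type*} : ι × List ι ≃ {l : List ι // l ≠ []} where
  toFun p := ⟨p.1 :: p.2, by simp⟩
  invFun l := (l.1.head l.2, l.1.tail)
  left_inv p := rfl
  right_inv l := Subtype.ext (List.cons_head_tail l.2)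

lemma sandwich_apply {n : ℕ} (A : Mat n) (i j a b : Fin n) :
    (A * single i j (1 : ℂ) * Aᴴ) a b = A a i * (starRingEnd ℂ) (A b j) := by
  simp [Matrix.mul_apply, Matrix.single, conjTranspose_apply, Finset.sum_ite_eq,
    Finset.sum_ite_eq', ite_and, Matrix.of_apply]

lemma pick_apply {n d : ℕ} (X : Fin d → Mat n) (S : Mat n → Mat n)
    (hS : ∀ H : Mat n,
      HasSum (fun w : List (Fin d) => wordProd X w * H * (wordProd X w)ᴴ) (S H))
    (i j k l : Fin n) :
    pick X (i, k) (j, l) = S (single i j (1 : ℂ)) k l := by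
  classical
  set M : Matrix (Fin n × Fin n) (Fin n × Fin n) ℂ := ∑ i, conjM (X i) ⊗ₖ X i with hM
  set f : List (Fin d) → Matrix (Fin n × Fin n) (Fin n × Fin n) ℂ :=
    fun w => conjM (wordProd X w) ⊗ₖ wordProd X w with hf
  set T : Matrix (Fin n × Fin n) (Fin n × Fin n) ℂ :=
    Matrix.of (fun p q => S (single q.2 q.1 (1 : ℂ)) p.2 p.1) with hTdef
  -- entrywise summability
  have hT : HasSum f T := by
    rw [show (HasSum f T ↔ ∀ p, HasSum (fun w => f w p) (T p)) from Pi.hasSum]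
    intro p
    rw [show (HasSum (fun w => f w p) (T p) ↔ ∀ q, HasSum (fun w => f w p q) (T p q)) from
      Pi.hasSum]
    intro q
    have := (Pi.hasSum.mp ((Pi.hasSum.mp
      (hS (single q.2 q.1 (1 : ℂ)))) p.2)) p.1
    convert this using 2 with w
    simp only [hf, kroneckerMap_apply, conjM, Matrix.map_apply, sandwich_apply]
    ring
    rfl
  -- `f` of the empty word is `1`
  have hf0 : f [] = 1 := by
    simp only [hf, wordProd, List.map_nil, List.prod_nil]
    have : conjM (1 : Mat n) = 1 := by simp [conjM]
    rw [this]
    ext ⟨p1, p2⟩ ⟨q1, q2⟩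
    simp [Matrix.one_apply, ite_and, Prod.ext_iff]
    aesop
  -- cons recursion
  have hcons : ∀ w : List (Fin d), M * f w = ∑ i : Fin d, f (i :: w) := by
    intro w
    rw [hM, Finset.sum_mul]
    refine Finset.sum_congr rfl fun i _ => ?_
    have h1 : wordProd X (i :: w) = X i * wordProd X w := by simp [wordProd]
    have h2 : conjM (X i * wordProd X w) = conjM (X i) * conjM (wordProd X w) :=
      Matrix.map_mul
    simp only [hf, h1, h2, ← Matrix.mul_kronecker_mul]
  -- sum over nonempty words
  have hT1 : HasSum (fun p : Fin d × List (Fin d) => f (p.1 :: p.2)) (T - 1) := by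
    have h1 : HasSum (fun x : {x // x ∉ ({[]} : Finset (List (Fin d)))} => f x)
        (T - ∑ w ∈ ({[]} : Finset (List (Fin d))), f w) :=
      (Finset.hasSum_iff_compl ({[]} : Finset (List (Fin d)))).mp hT
    rw [Finset.sum_singleton, hf0] at h1
    have := (Equiv.hasSum_iff
      ((consEquiv.trans (Equiv.subtypeEquivRight (fun l => by simp))) :
        Fin d × List (Fin d) ≃ {x : List (Fin d) // x ∉ ({[]} : Finset (List (Fin d)))})).mpr h1
    convert this using 1
    rfl
  -- collapse fibers
  have hT2 : HasSum (fun w => M * f w) (T - 1) := by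
    have hswap : HasSum (fun p : List (Fin d) × Fin d => f (p.2 :: p.1)) (T - 1) :=
      (Equiv.hasSum_iff (Equiv.prodComm _ _)).mpr hT1
    have := hswap.prod_fiberwise (g := fun w => ∑ i : Fin d, f (i :: w))
      (fun w => hasSum_fintype _)
    convert this using 2 with w
    exact hcons w
  -- multiply the sum by `M`
  have hT3 : HasSum (fun w => M * f w) (M * T) := by
    have hc : Continuous fun U : Matrix (Fin n × Fin n) (Fin n × Fin n) ℂ => M * U :=
      (LinearMap.mulLeft ℂ M).continuous_of_finiteDimensional
    exact hT.map (LinearMap.mulLeft ℂ M) hc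
  have hMT : M * T = T - 1 := hT3.unique hT2
  have hinv : (1 - M) * T = 1 := by
    rw [sub_mul, one_mul, hMT]
    abel
  have hTinv : (1 - M)⁻¹ = T := Matrix.inv_eq_right_inv hinv
  simp only [pick, psi, hTinv, Matrix.of_apply, hTdef]
  exact congrFun (congrFun hTinv (l, k)) (j, i)

/-- Let `X` be a strict row contraction, `Y` an `s×t` block matrix with
`n×n` blocks (`Y ((a,i),(b,j)) = (Y_{ij}) a b`, i.e. `Y = Σ_{ij} Y_{ij} ⊗ E_{ij}` viewed as
an `ns×nt` matrix), and let `S H = Σ_w X^w H X^{w*}` (the series is summable; here `S` is any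
function with that property).  Then the Choi matrix of
`Φ(H) = (S H) ⊗ I_s − Y·((S H) ⊗ I_t)·Y*` is
`P_X ⊗ I_s − (I_n ⊗ Y)·(P_X ⊗ I_t)·(I_n ⊗ Y*)`. -/
theorem choi_matrix_of_pick_map {n d s t : ℕ} (X : Fin d → Mat n)
    (hX : StrictRowContraction X)
    (Y : Matrix (Fin n × Fin s) (Fin n × Fin t) ℂ)
    (S : Mat n → Mat n)
    (hS : ∀ H : Mat n,
      HasSum (fun w : List (Fin d) => wordProd X w * H * (wordProd X w)ᴴ) (S H))
    (Φ : Mat n → Matrix (Fin n × Fin s) (Fin n × Fin s) ℂ)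
    (hΦ : ∀ H : Mat n,
      Φ H = (S H) ⊗ₖ (1 : Matrix (Fin s) (Fin s) ℂ) -
        Y * ((S H) ⊗ₖ (1 : Matrix (Fin t) (Fin t) ℂ)) * Yᴴ) :
    (∑ i : Fin n, ∑ j : Fin n, single i j (1 : ℂ) ⊗ₖ Φ (single i j (1 : ℂ))) =
      krA (pick X) (1 : Matrix (Fin s) (Fin s) ℂ) -
        ((1 : Mat n) ⊗ₖ Y) * krA (pick X) (1 : Matrix (Fin t) (Fin t) ℂ) * ((1 : Mat n) ⊗ₖ Y)ᴴ := by
  classical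
  have hp : ∀ i j k l : Fin n, pick X (i, k) (j, l) = S (single i j (1 : ℂ)) k l :=
    pick_apply X S hS
  ext ⟨i₀, i₁, a⟩ ⟨j₀, j₁, b⟩
  have hL : (∑ i : Fin n, ∑ j : Fin n,
      single i j (1 : ℂ) ⊗ₖ Φ (single i j (1 : ℂ))) (i₀, i₁, a) (j₀, j₁, b)
      = Φ (single i₀ j₀ (1 : ℂ)) (i₁, a) (j₁, b) := by
    simp [Matrix.sum_apply, Matrix.single, ite_and, Finset.sum_ite_eq,
      Finset.sum_ite_eq']
  rw [hL, hΦ, Matrix.sub_apply, Matrix.sub_apply]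
  congr 1
  · -- first terms
    simp [krA, hp]
  · -- second terms
    simp only [Matrix.mul_apply, krA, Matrix.kroneckerMap_apply, Matrix.one_apply,
      Matrix.conjTranspose_apply, Matrix.of_apply, Fintype.sum_prod_type, hp]
    simp [ite_and, apply_ite (starRingEnd ℂ), map_zero, Finset.sum_ite_eq, Finset.sum_ite_eq',
      mul_comm, mul_assoc, mul_left_comm, Finset.mul_sum, Finset.sum_mul]
end
end

section
/- For any strict row contraction X = (X₁,…,X_d) of n×n complex matrices, P_X − Σᵢ₌₁^d (Xᵢᵀ ⊗ I_n)·P_X·(conj(Xᵢ) ⊗ I_n) = 𝔠_n, where 𝔠_n is the Choi matrix. -/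
/-!
Common definitions: the ψ-involution, `vec`, the elementary Pick matrix, the Choi matrix,
Kronecker-product helpers with right-associated index types, the boomerang matrices, the
commutation matrix, and the Moore–Penrose predicate.
-/

open Matrix Filter
open scoped Kronecker Matrix.Norms.L2Operator ComplexOrder

noncomputable section

section Aux

variable {n d : ℕ}

lemma euclid_norm_sq {m : Type*} [Fintype m] (v : EuclideanSpace ℂ m) :
    ‖v‖ ^ 2 = ∑ i, ‖v i‖ ^ 2 := by
  rw [EuclideanSpace.norm_eq, Real.sq_sqrt]
  positivity

lemma euclid_norm_sq' {m : Type*} [Fintype m] (f : m → ℂ) :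
    ‖(WithLp.equiv 2 (m → ℂ)).symm f‖ ^ 2 = ∑ i, ‖f i‖ ^ 2 :=
  euclid_norm_sq _

lemma norm_one_kron_le (Y : Mat n) :
    ‖(1 : Matrix (Fin d) (Fin d) ℂ) ⊗ₖ Y‖ ≤ ‖Y‖ := by
  rw [Matrix.l2_opNorm_def]
  refine ContinuousLinearMap.opNorm_le_bound _ (norm_nonneg Y) fun x => ?_
  show ‖Matrix.toEuclideanLin ((1 : Matrix (Fin d) (Fin d) ℂ) ⊗ₖ Y) x‖ ≤ ‖Y‖ * ‖x‖
  have hnn : (0:ℝ) ≤ ‖Y‖ * ‖x‖ := by positivity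
  rw [← Real.sqrt_sq (norm_nonneg _), ← Real.sqrt_sq hnn]
  apply Real.sqrt_le_sqrt
  have key : ∀ p : Fin d × Fin n,
      (Matrix.toEuclideanLin ((1 : Matrix (Fin d) (Fin d) ℂ) ⊗ₖ Y) x) p
        = (Y *ᵥ fun j => x (p.1, j)) p.2 := by
    intro p
    simp [Matrix.toEuclideanLin_apply, Matrix.mulVec, dotProduct,
      Fintype.sum_prod_type, Matrix.one_apply, ite_mul]
  calc ‖Matrix.toEuclideanLin ((1 : Matrix (Fin d) (Fin d) ℂ) ⊗ₖ Y) x‖ ^ 2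
      = ∑ p : Fin d × Fin n,
        ‖(Matrix.toEuclideanLin ((1 : Matrix (Fin d) (Fin d) ℂ) ⊗ₖ Y) x) p‖ ^ 2 :=
        euclid_norm_sq _
    _ = ∑ t : Fin d, ∑ i : Fin n, ‖(Y *ᵥ fun j => x (t, j)) i‖ ^ 2 := by
        rw [Fintype.sum_prod_type]
        exact Finset.sum_congr rfl fun t _ => Finset.sum_congr rfl fun i _ => by rw [key (t, i)]
    _ ≤ ∑ t : Fin d, (‖Y‖ * ‖(WithLp.equiv 2 (Fin n → ℂ)).symm fun j => x (t, j)‖) ^ 2 := by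
        refine Finset.sum_le_sum fun t _ => ?_
        have h1 : ∑ i : Fin n, ‖(Y *ᵥ fun j => x (t, j)) i‖ ^ 2
            = ‖(WithLp.equiv 2 (Fin n → ℂ)).symm (Y *ᵥ fun j => x (t, j))‖ ^ 2 :=
          (euclid_norm_sq' _).symm
        rw [h1]
        have h2 := Matrix.l2_opNorm_mulVec Y ((WithLp.equiv 2 (Fin n → ℂ)).symm fun j => x (t, j))
        have h2' : ‖(WithLp.equiv 2 (Fin n → ℂ)).symm (Y *ᵥ fun j => x (t, j))‖
            ≤ ‖Y‖ * ‖(WithLp.equiv 2 (Fin n → ℂ)).symm fun j => x (t, j)‖ := by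
          simpa using h2
        exact pow_le_pow_left₀ (norm_nonneg _) h2' 2
    _ = ‖Y‖ ^ 2 * ∑ t : Fin d, ‖(WithLp.equiv 2 (Fin n → ℂ)).symm fun j => x (t, j)‖ ^ 2 := by
        rw [Finset.mul_sum]
        exact Finset.sum_congr rfl fun t _ => by ring
    _ = ‖Y‖ ^ 2 * ‖x‖ ^ 2 := by
        congr 1
        rw [euclid_norm_sq x, Fintype.sum_prod_type]
        exact Finset.sum_congr rfl fun t _ => by rw [euclid_norm_sq']
    _ = (‖Y‖ * ‖x‖) ^ 2 := by ring

lemma det_one_sub_isUnit (X : Fin d → Mat n) (hX : StrictRowContraction X) :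
    IsUnit (1 - ∑ i, conjM (X i) ⊗ₖ X i).det := by
  rw [isUnit_iff_ne_zero]
  intro hdet
  obtain ⟨v, hv0, hv⟩ := Matrix.exists_mulVec_eq_zero_iff.2 hdet
  set Y : Mat n := Matrix.of fun i j => v (j, i) with hY
  set R : Matrix (Fin n) (Fin d × Fin n) ℂ := Matrix.of fun i p => X p.1 i p.2 with hR
  have hvS : ∀ i j : Fin n, v (j, i)
      = ∑ l : Fin n, ∑ k : Fin n, (∑ t : Fin d,
          (starRingEnd ℂ) (X t j l) * X t i k) * v (l, k) := by
    intro i j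
    have h0 := congrFun hv (j, i)
    simp only [Matrix.sub_mulVec, Pi.sub_apply, Pi.zero_apply, sub_eq_zero,
      Matrix.one_mulVec] at h0
    rw [h0]
    simp [Matrix.mulVec, dotProduct, Fintype.sum_prod_type, conjM,
      Matrix.map_apply, Matrix.sum_apply]
  have hRR : R * Rᴴ = ∑ i, X i * (X i)ᴴ := by
    ext i j
    simp [hR, Matrix.mul_apply, Fintype.sum_prod_type, Matrix.sum_apply,
      Matrix.conjTranspose_apply]
  have hstep : ∀ (i : Fin n) (s : Fin d) (l : Fin n),
      (R * ((1 : Matrix (Fin d) (Fin d) ℂ) ⊗ₖ Y)) i (s, l) = ∑ k, X s i k * Y k l := by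
    intro i s l
    rw [Matrix.mul_apply, Fintype.sum_prod_type, Finset.sum_comm]
    simp [hR, Matrix.one_apply, mul_ite, ite_mul, Finset.sum_ite_eq, Finset.sum_ite_eq']
  have hstep2 : R * ((1 : Matrix (Fin d) (Fin d) ℂ) ⊗ₖ Y) * Rᴴ
      = ∑ t, X t * Y * (X t)ᴴ := by
    ext i j
    rw [Matrix.mul_apply, Fintype.sum_prod_type]
    simp only [hstep]
    simp only [hstep, Matrix.sum_apply, Matrix.mul_apply, Matrix.conjTranspose_apply,
      hR, Matrix.of_apply]
  have hfix : R * ((1 : Matrix (Fin d) (Fin d) ℂ) ⊗ₖ Y) * Rᴴ = Y := by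
    rw [hstep2]
    ext i j
    show (∑ t, X t * Y * (X t)ᴴ) i j = v (j, i)
    rw [hvS i j]
    simp only [Matrix.sum_apply, Matrix.mul_apply, Matrix.conjTranspose_apply, hY,
      Matrix.of_apply]
    rw [Finset.sum_comm]
    refine Finset.sum_congr rfl fun l _ => ?_
    simp only [Finset.sum_mul]
    rw [Finset.sum_comm]
    refine Finset.sum_congr rfl fun k _ => ?_
    refine Finset.sum_congr rfl fun t _ => ?_
    simp only [starRingEnd_apply]
    ring
  have hc : ‖∑ i, X i * (X i)ᴴ‖ < 1 := hX
  have hnY : ‖Y‖ ≤ ‖∑ i, X i * (X i)ᴴ‖ * ‖Y‖ := by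
    calc ‖Y‖ = ‖R * ((1 : Matrix (Fin d) (Fin d) ℂ) ⊗ₖ Y) * Rᴴ‖ := by rw [hfix]
      _ ≤ ‖R * ((1 : Matrix (Fin d) (Fin d) ℂ) ⊗ₖ Y)‖ * ‖Rᴴ‖ := Matrix.l2_opNorm_mul _ _
      _ ≤ (‖R‖ * ‖(1 : Matrix (Fin d) (Fin d) ℂ) ⊗ₖ Y‖) * ‖Rᴴ‖ :=
          mul_le_mul_of_nonneg_right (Matrix.l2_opNorm_mul _ _) (norm_nonneg _)
      _ ≤ (‖R‖ * ‖Y‖) * ‖Rᴴ‖ := by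
          refine mul_le_mul_of_nonneg_right ?_ (norm_nonneg _)
          exact mul_le_mul_of_nonneg_left (norm_one_kron_le Y) (norm_nonneg _)
      _ = (‖R‖ * ‖Rᴴ‖) * ‖Y‖ := by ring
      _ = ‖∑ i, X i * (X i)ᴴ‖ * ‖Y‖ := by
          rw [← hRR]
          congr 1
          have h1 : ‖(Rᴴ)ᴴ * Rᴴ‖ = ‖Rᴴ‖ * ‖Rᴴ‖ := Matrix.l2_opNorm_conjTranspose_mul_self Rᴴ
          rw [Matrix.conjTranspose_conjTranspose] at h1
          rw [h1, Matrix.l2_opNorm_conjTranspose]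
  have hY0 : Y = 0 := by
    by_contra hY0
    have hpos : 0 < ‖Y‖ := norm_pos_iff.2 hY0
    nlinarith
  apply hv0
  funext p
  have : Y p.2 p.1 = 0 := by rw [hY0]; rfl
  simpa [hY] using this

lemma psi_sub (U V : Matrix (Fin n × Fin n) (Fin n × Fin n) ℂ) :
    psi n (U - V) = psi n U - psi n V := rfl

lemma psi_sum {ι : Type*} (s : Finset ι) (U : ι → Matrix (Fin n × Fin n) (Fin n × Fin n) ℂ) :
    psi n (∑ i ∈ s, U i) = ∑ i ∈ s, psi n (U i) := by
  ext p q
  simp [psi, Matrix.sum_apply]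

lemma psi_one : psi n (1 : Matrix (Fin n × Fin n) (Fin n × Fin n) ℂ) = choiM n := by
  ext ⟨p1, p2⟩ ⟨q1, q2⟩
  simp only [psi, choiM, Matrix.of_apply, Matrix.one_apply, Matrix.sum_apply,
    Matrix.kroneckerMap_apply, Matrix.single, Prod.mk.injEq]
  by_cases h1 : p2 = p1
  · subst h1
    by_cases h2 : q2 = q1
    · subst h2
      have hsimp : ∀ x x1 : Fin n,
          (if x = p2 ∧ x1 = q2 then if x = p2 ∧ x1 = q2 then (1:ℂ) else 0 else 0)
            = if x = p2 then if x1 = q2 then (1:ℂ) else 0 else 0 := by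
        intro x x1; split_ifs <;> simp_all
      simp [hsimp, Finset.sum_ite_eq, Finset.sum_ite_eq']
    · rw [if_neg (by simp [h2])]
      refine (Finset.sum_eq_zero fun i _ => Finset.sum_eq_zero fun j _ => ?_).symm
      split_ifs with ha hb <;> simp_all
  · rw [if_neg (by simp [h1])]
    refine (Finset.sum_eq_zero fun i _ => Finset.sum_eq_zero fun j _ => ?_).symm
    split_ifs with ha hb <;> simp_all

lemma psi_conj_mul (U : Matrix (Fin n × Fin n) (Fin n × Fin n) ℂ) (C D : Mat n) :
    (C ⊗ₖ (1 : Mat n)) * psi n U * (D ⊗ₖ (1 : Mat n)) = psi n (U * (D ⊗ₖ Cᵀ)) := by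
  ext p q
  simp only [psi, Matrix.mul_apply, Matrix.of_apply, Matrix.kroneckerMap_apply,
    Matrix.one_apply, Matrix.transpose_apply, Fintype.sum_prod_type, mul_ite, mul_zero,
    mul_one, ite_mul, zero_mul, Finset.sum_ite_eq, Finset.sum_ite_eq', Finset.mem_univ, if_true]
  refine Finset.sum_congr rfl fun u _ => ?_
  rw [Finset.sum_mul]
  refine Finset.sum_congr rfl fun r _ => ?_
  ring

end Aux

/-- For any strict row contraction `X`,
`P_X − Σᵢ (Xᵢᵀ ⊗ I_n)·P_X·(conj(Xᵢ) ⊗ I_n) = 𝔠_n`, the Choi matrix. -/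
theorem pick_stein_identity {n d : ℕ} (X : Fin d → Mat n)
    (hX : StrictRowContraction X) :
    pick X - ∑ i, ((X i)ᵀ ⊗ₖ (1 : Mat n)) * pick X * (conjM (X i) ⊗ₖ (1 : Mat n)) =
      choiM n := by
  classical
  have hdet : IsUnit (1 - ∑ i, conjM (X i) ⊗ₖ X i).det := det_one_sub_isUnit X hX
  have hTinv : (1 - ∑ i, conjM (X i) ⊗ₖ X i)⁻¹ * (1 - ∑ i, conjM (X i) ⊗ₖ X i) = 1 :=
    Matrix.nonsing_inv_mul _ hdet
  have hsum : ∑ i, ((X i)ᵀ ⊗ₖ (1 : Mat n)) * pick X * (conjM (X i) ⊗ₖ (1 : Mat n))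
      = psi n ((1 - ∑ i, conjM (X i) ⊗ₖ X i)⁻¹ * ∑ i, conjM (X i) ⊗ₖ X i) := by
    rw [Finset.mul_sum, psi_sum]
    refine Finset.sum_congr rfl fun i _ => ?_
    rw [pick, psi_conj_mul, Matrix.transpose_transpose]
  rw [hsum, pick, ← psi_sub]
  have h2 : (1 - ∑ i, conjM (X i) ⊗ₖ X i)⁻¹
        - (1 - ∑ i, conjM (X i) ⊗ₖ X i)⁻¹ * ∑ i, conjM (X i) ⊗ₖ X i
      = (1 - ∑ i, conjM (X i) ⊗ₖ X i)⁻¹ * (1 - ∑ i, conjM (X i) ⊗ₖ X i) := by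
    rw [Matrix.mul_sub, Matrix.mul_one]
  rw [h2, hTinv, psi_one]
end
end

section
/- (Boomerang switch identities) Let n ≥ 1 and let B̆ ∈ M_{n³×n}(ℂ) be the boomerang matrix. Then: (1) for every C ∈ M_n(ℂ), (C ⊗ I_n ⊗ I_n)·B̆ = (I_n ⊗ I_n ⊗ Cᵀ)·B̆; and (2) for every A ∈ M_{n²}(ℂ) and C, D ∈ M_n(ℂ), B̆ᵀ·(A ⊗ (CD))·B̆ = B̆ᵀ·(((Cᵀ ⊗ I_n)·A·(Dᵀ ⊗ I_n)) ⊗ I_n)·B̆. -/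
/-!
Common definitions: the ψ-involution, `vec`, the elementary Pick matrix, the Choi matrix,
Kronecker-product helpers with right-associated index types, the boomerang matrices, the
commutation matrix, and the Moore–Penrose predicate.
-/

open Matrix Filter
open scoped Kronecker Matrix.Norms.L2Operator ComplexOrder

noncomputable section

lemma mul_boom_apply {n : ℕ} (M : Matrix (Fin n × Fin n × Fin n) (Fin n × Fin n × Fin n) ℂ)
    (p : Fin n × Fin n × Fin n) (l : Fin n) :
    (M * boom n) p l = ∑ i, M p (i, l, i) := by
  simp only [Matrix.mul_apply, boom, Matrix.of_apply, Fintype.sum_prod_type, ite_and, mul_ite,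
    mul_one, mul_zero]
  simp [Finset.sum_ite_eq, Finset.sum_ite_eq']

lemma boom_sandwich {n : ℕ} (M : Matrix (Fin n × Fin n × Fin n) (Fin n × Fin n × Fin n) ℂ)
    (l l' : Fin n) :
    ((boom n)ᵀ * M * boom n) l l' = ∑ i, ∑ k, M (i, l, i) (k, l', k) := by
  rw [Matrix.mul_assoc]
  simp only [Matrix.mul_apply, mul_boom_apply, Matrix.transpose_apply, boom, Matrix.of_apply,
    Fintype.sum_prod_type, ite_and, ite_mul, one_mul, zero_mul, Finset.sum_mul, Finset.mul_sum]
  simp [Finset.sum_ite_eq, Finset.sum_ite_eq']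

/-- **Boomerang switch identities.** For the boomerang matrix `B̆`:
(1) `(C ⊗ I_n ⊗ I_n)·B̆ = (I_n ⊗ I_n ⊗ Cᵀ)·B̆` for all `C ∈ M_n(ℂ)`;
(2) `B̆ᵀ·(A ⊗ (CD))·B̆ = B̆ᵀ·(((Cᵀ ⊗ I_n)·A·(Dᵀ ⊗ I_n)) ⊗ I_n)·B̆` for all `A ∈ M_{n²}(ℂ)`
and `C, D ∈ M_n(ℂ)`. -/
theorem boomerang_switch {n : ℕ} (hn : 1 ≤ n) :
    (∀ C : Mat n,
      kr3 C (1 : Mat n) (1 : Mat n) * boom n = kr3 (1 : Mat n) (1 : Mat n) Cᵀ * boom n) ∧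
    (∀ (A : Matrix (Fin n × Fin n) (Fin n × Fin n) ℂ) (C D : Mat n),
      (boom n)ᵀ * krA A (C * D) * boom n =
        (boom n)ᵀ * krA ((Cᵀ ⊗ₖ (1 : Mat n)) * A * (Dᵀ ⊗ₖ (1 : Mat n))) (1 : Mat n) * boom n) := by
  constructor
  · intro C
    ext ⟨i, j, k⟩ l
    simp only [mul_boom_apply, kr3, Matrix.of_apply, Matrix.one_apply, Matrix.transpose_apply,
      ite_mul, mul_ite, one_mul, mul_one, zero_mul, mul_zero]
    simp [Finset.sum_ite_eq, Finset.sum_ite_eq']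
  · intro A C D
    ext l l'
    rw [boom_sandwich, boom_sandwich]
    simp only [krA, Matrix.of_apply, Matrix.one_apply, Matrix.mul_apply,
      Matrix.kroneckerMap_apply, Matrix.transpose_apply, Fintype.sum_prod_type,
      mul_ite, ite_mul, mul_one, one_mul, mul_zero, zero_mul, Finset.sum_mul, Finset.mul_sum]
    simp only [Finset.sum_ite_eq, Finset.sum_ite_eq', Finset.mem_univ, if_true]
    have key : ∀ f : Fin n → Fin n → Fin n → ℂ,
        ∑ a, ∑ b, ∑ c, f a b c = ∑ c, ∑ b, ∑ a, f a b c := by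
      intro f
      calc (∑ a, ∑ b, ∑ c, f a b c) = ∑ b, ∑ a, ∑ c, f a b c := Finset.sum_comm
        _ = ∑ b, ∑ c, ∑ a, f a b c := Finset.sum_congr rfl fun _ _ => Finset.sum_comm
        _ = ∑ c, ∑ b, ∑ a, f a b c := Finset.sum_comm
    conv_rhs => rw [key]
    refine Finset.sum_congr rfl fun x _ => Finset.sum_congr rfl fun x1 _ =>
      Finset.sum_congr rfl fun x2 _ => ?_
    ring
end
end

section
/- Let X = (X₁,…,X_d) be a strict row contraction of n×n complex matrices and let B̆ ∈ M_{n³×n}(ℂ) be the boomerang matrix. Then for every H ∈ M_n(ℂ), B̆ᵀ·(P_X ⊗ (H − Σᵢ₌₁^d Xᵢ H Xᵢ*))·B̆ = H. -/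
/-!
Common definitions: the ψ-involution, `vec`, the elementary Pick matrix, the Choi matrix,
Kronecker-product helpers with right-associated index types, the boomerang matrices, the
commutation matrix, and the Moore–Penrose predicate.
-/

open Matrix Filter
open scoped Kronecker Matrix.Norms.L2Operator ComplexOrder

noncomputable section

lemma blockDiag_norm_le {n d : ℕ} (M : Mat n) :
    ‖blockDiagonal (fun _ : Fin d => M)‖ ≤ ‖M‖ := by
  rw [Matrix.l2_opNorm_def]
  refine ContinuousLinearMap.opNorm_le_bound _ (norm_nonneg _) fun x => ?_
  simp only [LinearEquiv.trans_apply, LinearMap.coe_toContinuousLinearMap']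
  set y := Matrix.toEuclideanLin (blockDiagonal fun _ : Fin d => M) x with hy
  -- slices of x
  set xs : Fin d → EuclideanSpace ℂ (Fin n) := fun t => (WithLp.equiv 2 _).symm (fun k => x (k, t)) with hxs
  have hyval : ∀ j t, y (j, t) = (M *ᵥ (fun k => x (k, t))) j := by
    intro j t
    rw [hy, Matrix.toEuclideanLin_apply]
    show (blockDiagonal (fun _ : Fin d => M) *ᵥ (fun p => x p)) (j, t) = _
    simp only [Matrix.mulVec, dotProduct, Fintype.sum_prod_type, Matrix.blockDiagonal_apply]
    rw [Finset.sum_comm]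
    simp [Finset.sum_ite_eq, ite_mul]
  have hsq : ‖y‖ ^ 2 ≤ (‖M‖ * ‖x‖) ^ 2 := by
    have hy2 : ‖y‖ ^ 2 = ∑ t : Fin d, ∑ j : Fin n, ‖y (j, t)‖ ^ 2 := by
      rw [EuclideanSpace.norm_eq, Real.sq_sqrt (by positivity)]
      rw [Fintype.sum_prod_type, Finset.sum_comm]
    have hx2 : ‖x‖ ^ 2 = ∑ t : Fin d, ‖xs t‖ ^ 2 := by
      have : ∀ t, ‖xs t‖ ^ 2 = ∑ k : Fin n, ‖x (k, t)‖ ^ 2 := by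
        intro t
        rw [EuclideanSpace.norm_eq, Real.sq_sqrt (by positivity)]
        rfl
      simp only [this]
      rw [EuclideanSpace.norm_eq, Real.sq_sqrt (by positivity), Fintype.sum_prod_type,
        Finset.sum_comm]
    have hslice : ∀ t, ∑ j : Fin n, ‖y (j, t)‖ ^ 2 ≤ (‖M‖ * ‖xs t‖) ^ 2 := by
      intro t
      have h1 : ∑ j : Fin n, ‖y (j, t)‖ ^ 2
          = ‖(EuclideanSpace.equiv (Fin n) ℂ).symm (M *ᵥ (fun k => x (k, t)))‖ ^ 2 := by
        rw [EuclideanSpace.norm_eq, Real.sq_sqrt (by positivity)]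
        exact Finset.sum_congr rfl fun j _ => by rw [hyval]; rfl
      rw [h1]
      have h2 := Matrix.l2_opNorm_mulVec M (xs t)
      have hx' : (WithLp.equiv 2 _) (xs t) = fun k => x (k, t) := rfl
      rw [← hx'] at *
      have : ‖(EuclideanSpace.equiv (Fin n) ℂ).symm (M *ᵥ (WithLp.equiv 2 _) (xs t))‖
          ≤ ‖M‖ * ‖xs t‖ := h2
      exact pow_le_pow_left₀ (norm_nonneg _) this 2
    calc ‖y‖ ^ 2 = ∑ t : Fin d, ∑ j : Fin n, ‖y (j, t)‖ ^ 2 := hy2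
      _ ≤ ∑ t : Fin d, (‖M‖ * ‖xs t‖) ^ 2 := Finset.sum_le_sum fun t _ => hslice t
      _ = (‖M‖) ^ 2 * ∑ t : Fin d, ‖xs t‖ ^ 2 := by
          rw [Finset.mul_sum]; exact Finset.sum_congr rfl fun t _ => by ring
      _ = (‖M‖ * ‖x‖) ^ 2 := by rw [← hx2] at *; ring
  exact (pow_le_pow_iff_left₀ (norm_nonneg _) (by positivity) two_ne_zero).mp hsq

def rowMat {n d : ℕ} (X : Fin d → Mat n) : Matrix (Fin n) (Fin n × Fin d) ℂ :=
  Matrix.of fun i p => X p.2 i p.1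

lemma rowMat_fact {n d : ℕ} (X : Fin d → Mat n) (M : Mat n) :
    rowMat X * blockDiagonal (fun _ : Fin d => M) * (rowMat X)ᴴ
      = ∑ t, X t * M * (X t)ᴴ := by
  ext i i'
  simp only [Matrix.mul_apply, Matrix.sum_apply, rowMat, Matrix.of_apply,
    Matrix.conjTranspose_apply, Matrix.blockDiagonal_apply, Fintype.sum_prod_type,
    ite_mul, zero_mul, mul_ite, mul_zero]
  rw [Finset.sum_comm]
  refine Finset.sum_congr rfl fun t _ => Finset.sum_congr rfl fun k _ => ?_
  congr 1
  rw [Finset.sum_comm]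
  simp [Finset.sum_ite_eq]

lemma rowMat_sq {n d : ℕ} (X : Fin d → Mat n) :
    rowMat X * (rowMat X)ᴴ = ∑ t, X t * (X t)ᴴ := by
  ext i i'
  simp only [Matrix.mul_apply, Matrix.sum_apply, rowMat, Matrix.of_apply,
    Matrix.conjTranspose_apply, Fintype.sum_prod_type]
  rw [Finset.sum_comm]

lemma phi_norm_le {n d : ℕ} (X : Fin d → Mat n) (M : Mat n) :
    ‖∑ t, X t * M * (X t)ᴴ‖ ≤ ‖∑ t, X t * (X t)ᴴ‖ * ‖M‖ := by
  rw [← rowMat_fact X M, ← rowMat_sq X]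
  have h1 : ‖rowMat X * blockDiagonal (fun _ : Fin d => M) * (rowMat X)ᴴ‖
      ≤ ‖rowMat X‖ * ‖blockDiagonal (fun _ : Fin d => M)‖ * ‖(rowMat X)ᴴ‖ := by
    refine le_trans (Matrix.l2_opNorm_mul _ _) ?_
    exact mul_le_mul_of_nonneg_right (Matrix.l2_opNorm_mul _ _) (norm_nonneg _)
  have h2 : ‖rowMat X * (rowMat X)ᴴ‖ = ‖rowMat X‖ * ‖rowMat X‖ := by
    calc ‖rowMat X * (rowMat X)ᴴ‖ = ‖((rowMat X)ᴴ)ᴴ * (rowMat X)ᴴ‖ := by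
          rw [Matrix.conjTranspose_conjTranspose]
      _ = ‖(rowMat X)ᴴ‖ * ‖(rowMat X)ᴴ‖ := Matrix.l2_opNorm_conjTranspose_mul_self _
      _ = ‖rowMat X‖ * ‖rowMat X‖ := by rw [Matrix.l2_opNorm_conjTranspose]
  refine le_trans h1 ?_
  rw [Matrix.l2_opNorm_conjTranspose, h2]
  calc ‖rowMat X‖ * ‖blockDiagonal (fun _ : Fin d => M)‖ * ‖rowMat X‖
      ≤ ‖rowMat X‖ * ‖M‖ * ‖rowMat X‖ := by
        have := blockDiag_norm_le (d := d) M
        gcongr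
    _ = ‖rowMat X‖ * ‖rowMat X‖ * ‖M‖ := by ring

lemma fixed_point_zero {n d : ℕ} {X : Fin d → Mat n} (hX : ‖∑ i, X i * (X i)ᴴ‖ < 1)
    {M : Mat n} (hM : M = ∑ t, X t * M * (X t)ᴴ) : M = 0 := by
  have h := phi_norm_le X M
  rw [← hM] at h
  by_contra hne
  have hpos : 0 < ‖M‖ := norm_pos_iff.mpr hne
  nlinarith

lemma isUnit_oneSubK {n d : ℕ} {X : Fin d → Mat n} (hX : ‖∑ i, X i * (X i)ᴴ‖ < 1) :
    IsUnit (1 - ∑ i, conjM (X i) ⊗ₖ X i) := by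
  rw [← Matrix.mulVec_injective_iff_isUnit]
  have key : ∀ u : (Fin n × Fin n) → ℂ,
      (1 - ∑ i, conjM (X i) ⊗ₖ X i) *ᵥ u = 0 → u = 0 := by
    intro u hu
    have hKu : ∀ p, u p = ((∑ i, conjM (X i) ⊗ₖ X i) *ᵥ u) p := by
      intro p
      have := congrFun hu p
      simp [Matrix.sub_mulVec, sub_eq_zero, Matrix.one_mulVec] at this
      exact this
    set M : Mat n := Matrix.of fun a b => u (b, a) with hMdef
    have hM : M = ∑ t, X t * M * (X t)ᴴ := by
      ext a b
      rw [hMdef, Matrix.of_apply, hKu (b, a)]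
      simp only [Matrix.mulVec, dotProduct, Matrix.sum_apply, Matrix.kroneckerMap_apply,
        conjM, Matrix.map_apply, Fintype.sum_prod_type, Matrix.mul_apply,
        Matrix.conjTranspose_apply, Finset.sum_mul, Finset.mul_sum]
      calc ∑ x : Fin n, ∑ y : Fin n, ∑ t : Fin d,
              (starRingEnd ℂ) (X t b x) * X t a y * u (x, y)
          = ∑ x : Fin n, ∑ t : Fin d, ∑ y : Fin n,
              (starRingEnd ℂ) (X t b x) * X t a y * u (x, y) :=
            Finset.sum_congr rfl fun _ _ => Finset.sum_comm
        _ = ∑ t : Fin d, ∑ x : Fin n, ∑ y : Fin n,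
              (starRingEnd ℂ) (X t b x) * X t a y * u (x, y) := Finset.sum_comm
        _ = ∑ t : Fin d, ∑ x : Fin n, ∑ y : Fin n,
              X t a y * Matrix.of (fun a b => u (b, a)) y x * star (X t b x) := by
            refine Finset.sum_congr rfl fun t _ => Finset.sum_congr rfl fun x _ =>
              Finset.sum_congr rfl fun y _ => ?_
            simp only [Matrix.of_apply, starRingEnd_apply]
            ring
    have : M = 0 := fixed_point_zero hX hM
    funext p
    have := congrFun (congrFun this p.2) p.1
    simpa [hMdef] using this
  intro u v huv
  have h0 : (1 - ∑ i, conjM (X i) ⊗ₖ X i) *ᵥ (u - v) = 0 := by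
    rw [Matrix.mulVec_sub, huv, sub_self]
  exact sub_eq_zero.mp (key _ h0)

/-- For a strict row contraction `X` and every `H ∈ M_n(ℂ)`,
`B̆ᵀ·(P_X ⊗ (H − Σᵢ Xᵢ H Xᵢ*))·B̆ = H`. -/
theorem boomerang_pick_compression {n d : ℕ} (X : Fin d → Mat n)
    (hX : StrictRowContraction X) (H : Mat n) :
    (boom n)ᵀ * krA (pick X) (H - ∑ i, X i * H * (X i)ᴴ) * boom n = H := by
  classical
  have hU : IsUnit (1 - ∑ i, conjM (X i) ⊗ₖ X i) := isUnit_oneSubK hX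
  have hdet : IsUnit (1 - ∑ i, conjM (X i) ⊗ₖ X i).det :=
    (Matrix.isUnit_iff_isUnit_det _).mp hU
  set M : Mat n := H - ∑ i, X i * H * (X i)ᴴ with hMdef
  set v : Fin n × Fin n → ℂ := fun p => H p.2 p.1 with hv
  have hSv : (1 - ∑ i, conjM (X i) ⊗ₖ X i) *ᵥ v = fun p => M p.2 p.1 := by
    funext p
    obtain ⟨i', i⟩ := p
    simp only [Matrix.sub_mulVec, Matrix.one_mulVec, Pi.sub_apply, hMdef, Matrix.sub_apply,
      Matrix.sum_apply, Matrix.mulVec, dotProduct, Matrix.kroneckerMap_apply, conjM,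
      Matrix.map_apply, Fintype.sum_prod_type, Matrix.mul_apply, Matrix.conjTranspose_apply,
      Finset.sum_mul, Finset.mul_sum, hv]
    simp only [sub_mul, Finset.sum_sub_distrib]
    congr 1
    · simp [Matrix.one_apply, Prod.ext_iff, ite_and, Finset.sum_ite_eq, ite_mul]
    · simp only [Finset.sum_mul]
      calc ∑ x : Fin n, ∑ y : Fin n, ∑ t : Fin d,
              (starRingEnd ℂ) (X t i' x) * X t i y * H y x
          = ∑ x : Fin n, ∑ t : Fin d, ∑ y : Fin n,
              (starRingEnd ℂ) (X t i' x) * X t i y * H y x :=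
            Finset.sum_congr rfl fun _ _ => Finset.sum_comm
        _ = ∑ t : Fin d, ∑ x : Fin n, ∑ y : Fin n,
              (starRingEnd ℂ) (X t i' x) * X t i y * H y x := Finset.sum_comm
        _ = ∑ t : Fin d, ∑ x : Fin n, ∑ y : Fin n,
              X t i y * H y x * star (X t i' x) := by
            refine Finset.sum_congr rfl fun t _ => Finset.sum_congr rfl fun x _ =>
              Finset.sum_congr rfl fun y _ => ?_
            simp only [starRingEnd_apply]
            ring
  have hinv : (1 - ∑ i, conjM (X i) ⊗ₖ X i)⁻¹ *ᵥ ((1 - ∑ i, conjM (X i) ⊗ₖ X i) *ᵥ v) = v := by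
    rw [Matrix.mulVec_mulVec, Matrix.nonsing_inv_mul _ hdet, Matrix.one_mulVec]
  ext ℓ ℓ'
  have hfin := congrFun hinv (ℓ', ℓ)
  rw [hSv] at hfin
  simp only [Matrix.mulVec, dotProduct, Fintype.sum_prod_type, hv] at hfin
  simp only [Matrix.mul_apply, Matrix.transpose_apply, boom, krA, pick, psi, Matrix.of_apply,
    Fintype.sum_prod_type, ite_mul, zero_mul, one_mul, mul_ite, mul_zero, ite_and,
    Finset.sum_ite_eq, Finset.sum_ite_eq', Finset.mem_univ, if_true]
  simpa using hfin
end
end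

section
/- Let n, s, t ≥ 1, A ∈ M_{n²}(ℂ), C ∈ M_n(ℂ), and Z ∈ M_{nt×ns}(ℂ). Then ((A ⊗ I_t)·(I_n ⊗ Z) ⊗ C)·B̆_s = (A ⊗ I_t ⊗ C)·B̆_t·Z, where B̆_r denotes the ampliated boomerang matrix. -/
/-!
Common definitions: the ψ-involution, `vec`, the elementary Pick matrix, the Choi matrix,
Kronecker-product helpers with right-associated index types, the boomerang matrices, the
commutation matrix, and the Moore–Penrose predicate.
-/

open Matrix Filter
open scoped Kronecker Matrix.Norms.L2Operator ComplexOrder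

noncomputable section

/-- For `A ∈ M_{n²}(ℂ)`, `C ∈ M_n(ℂ)` and `Z ∈ M_{nt×ns}(ℂ)`,
`((A ⊗ I_t)·(I_n ⊗ Z) ⊗ C)·B̆_s = (A ⊗ I_t ⊗ C)·B̆_t·Z`, where `B̆_r` is the ampliated
boomerang matrix. -/
theorem ampliated_boomerang_right {n s t : ℕ} (hn : 1 ≤ n) (hs : 1 ≤ s) (ht : 1 ≤ t)
    (A : Matrix (Fin n × Fin n) (Fin n × Fin n) ℂ) (C : Mat n)
    (Z : Matrix (Fin n × Fin t) (Fin n × Fin s) ℂ) :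
    krT (krA A (1 : Matrix (Fin t) (Fin t) ℂ) * ((1 : Mat n) ⊗ₖ Z)) C * boomAmp n s =
      krT (krA A (1 : Matrix (Fin t) (Fin t) ℂ)) C * boomAmp n t * Z := by
  have hBA : ∀ (r : ℕ) (p : Fin n × Fin n × Fin r × Fin n) (q : Fin n × Fin r),
      boomAmp n r p q = if p.2.2.2 = p.1 ∧ q.1 = p.2.1 ∧ p.2.2.1 = q.2 then 1 else 0 := by
    intro r p q
    simp only [boomAmp, mul_apply, preBoom, commMat, Matrix.of_apply,
      Fintype.sum_prod_type, ite_and, ite_mul, mul_ite, one_mul, mul_one,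
      zero_mul, mul_zero, Finset.sum_ite_eq, Finset.sum_ite_eq',
      Finset.sum_ite_irrel, Finset.sum_const_zero, Finset.mem_univ, if_true]
  ext ⟨i, j, a, k⟩ ⟨b, l⟩
  simp only [mul_apply, hBA, krT, krA, Matrix.of_apply, kroneckerMap_apply,
    Matrix.one_apply, Fintype.sum_prod_type, ite_and, ite_mul, mul_ite,
    one_mul, mul_one, zero_mul, mul_zero, Finset.sum_ite_eq, Finset.sum_ite_eq',
    Finset.sum_ite_irrel, Finset.sum_const_zero, Finset.mem_univ, if_true,
    Finset.mul_sum, Finset.sum_mul]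
  rw [Finset.sum_comm]
  exact Finset.sum_congr rfl fun q _ => Finset.sum_congr rfl fun i' _ => by ring
end
end

section
/- Let n, s ≥ 1, A ∈ M_{n²}(ℂ), C ∈ M_n(ℂ), and J, K ∈ M_{ns}(ℂ). Then B̆_sᵀ·((I_n ⊗ J)·(A ⊗ I_s)·(I_n ⊗ K) ⊗ C)·B̆_s = J·(B̆_sᵀ·(A ⊗ I_s ⊗ C)·B̆_s)·K, where B̆_s denotes the ampliated boomerang matrix. -/
/-!
Common definitions: the ψ-involution, `vec`, the elementary Pick matrix, the Choi matrix,
Kronecker-product helpers with right-associated index types, the boomerang matrices, the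
commutation matrix, and the Moore–Penrose predicate.
-/

open Matrix Filter
open scoped Kronecker Matrix.Norms.L2Operator ComplexOrder

noncomputable section

section BoomHelpers

lemma boomAmp_apply' (n r : ℕ) (p : Fin n × Fin n × Fin r × Fin n) (q : Fin n × Fin r) :
    boomAmp n r p q = if p.2.2.2 = p.1 ∧ q.1 = p.2.1 ∧ p.2.2.1 = q.2 then 1 else 0 := by
  simp [boomAmp, Matrix.mul_apply, preBoom, commMat, Fintype.sum_prod_type, ite_and,
    Finset.sum_ite_eq, Finset.sum_ite_eq']

lemma boomT_mul' {n s : ℕ} {α : Type*} [Fintype α]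
    (M : Matrix (Fin n × Fin n × Fin s × Fin n) α ℂ) (q : Fin n × Fin s) (p : α) :
    ((boomAmp n s)ᵀ * M) q p = ∑ i : Fin n, M (i, q.1, q.2, i) p := by
  obtain ⟨b, l⟩ := q
  simp [Matrix.mul_apply, boomAmp_apply', Matrix.transpose_apply, Fintype.sum_prod_type, ite_and,
    Finset.sum_ite_eq, Finset.sum_ite_eq', ite_mul, zero_mul]

lemma mul_boom' {n s : ℕ} {α : Type*} [Fintype α]
    (M : Matrix α (Fin n × Fin n × Fin s × Fin n) ℂ) (p : α) (q : Fin n × Fin s) :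
    (M * boomAmp n s) p q = ∑ i : Fin n, M p (i, q.1, q.2, i) := by
  obtain ⟨b, l⟩ := q
  simp [Matrix.mul_apply, boomAmp_apply', Fintype.sum_prod_type, ite_and,
    Finset.sum_ite_eq, Finset.sum_ite_eq', mul_ite, mul_zero]

lemma kron_one_mul' {n s : ℕ} {α : Type*} [Fintype α]
    (J : Matrix (Fin n × Fin s) (Fin n × Fin s) ℂ)
    (M : Matrix (Fin n × Fin n × Fin s) α ℂ) (i : Fin n) (y : Fin n × Fin s) (q : α) :
    (((1 : Mat n) ⊗ₖ J) * M) (i, y.1, y.2) q =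
      ∑ x : Fin n × Fin s, J y x * M (i, x.1, x.2) q := by
  rw [Matrix.mul_apply, Fintype.sum_prod_type]
  simp only [Matrix.kroneckerMap_apply, Matrix.one_apply, ite_mul, zero_mul, one_mul]
  rw [Finset.sum_comm]
  simp [Finset.sum_ite_eq]

lemma mul_kron_one' {n s : ℕ} {α : Type*} [Fintype α]
    (K : Matrix (Fin n × Fin s) (Fin n × Fin s) ℂ)
    (M : Matrix α (Fin n × Fin n × Fin s) ℂ) (p : α) (i : Fin n) (y : Fin n × Fin s) :
    (M * ((1 : Mat n) ⊗ₖ K)) p (i, y.1, y.2) =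
      ∑ x : Fin n × Fin s, M p (i, x.1, x.2) * K x y := by
  rw [Matrix.mul_apply, Fintype.sum_prod_type]
  simp only [Matrix.kroneckerMap_apply, Matrix.one_apply, ite_mul, zero_mul, one_mul,
    mul_ite, mul_zero]
  rw [Finset.sum_comm]
  simp [Finset.sum_ite_eq']

lemma left_tw' {n s : ℕ} (J : Matrix (Fin n × Fin s) (Fin n × Fin s) ℂ)
    (M : Matrix (Fin n × Fin n × Fin s) (Fin n × Fin n × Fin s) ℂ) (C : Mat n) :
    (boomAmp n s)ᵀ * krT (((1 : Mat n) ⊗ₖ J) * M) C = J * ((boomAmp n s)ᵀ * krT M C) := by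
  ext q p
  rw [boomT_mul', Matrix.mul_apply]
  simp only [boomT_mul', krT, Matrix.of_apply, kron_one_mul', Finset.sum_mul, Finset.mul_sum]
  rw [Finset.sum_comm]
  simp only [mul_assoc]

lemma right_tw' {n s : ℕ} (K : Matrix (Fin n × Fin s) (Fin n × Fin s) ℂ)
    (M : Matrix (Fin n × Fin n × Fin s) (Fin n × Fin n × Fin s) ℂ) (C : Mat n) :
    krT (M * ((1 : Mat n) ⊗ₖ K)) C * boomAmp n s = krT M C * boomAmp n s * K := by
  ext p q
  rw [mul_boom', Matrix.mul_apply]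
  simp only [mul_boom', krT, Matrix.of_apply, mul_kron_one', Finset.sum_mul, Finset.mul_sum]
  rw [Finset.sum_comm]
  refine Finset.sum_congr rfl fun x _ => Finset.sum_congr rfl fun i _ => ?_
  ring

end BoomHelpers

/-- For `A ∈ M_{n²}(ℂ)`, `C ∈ M_n(ℂ)` and `J, K ∈ M_{ns}(ℂ)`,
`B̆_sᵀ·((I_n ⊗ J)·(A ⊗ I_s)·(I_n ⊗ K) ⊗ C)·B̆_s = J·(B̆_sᵀ·(A ⊗ I_s ⊗ C)·B̆_s)·K`. -/
theorem ampliated_boomerang_double {n s : ℕ} (hn : 1 ≤ n) (hs : 1 ≤ s)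
    (A : Matrix (Fin n × Fin n) (Fin n × Fin n) ℂ) (C : Mat n)
    (J K : Matrix (Fin n × Fin s) (Fin n × Fin s) ℂ) :
    (boomAmp n s)ᵀ *
        krT (((1 : Mat n) ⊗ₖ J) * krA A (1 : Matrix (Fin s) (Fin s) ℂ) * ((1 : Mat n) ⊗ₖ K)) C *
        boomAmp n s =
      J * ((boomAmp n s)ᵀ * krT (krA A (1 : Matrix (Fin s) (Fin s) ℂ)) C * boomAmp n s) * K := by
  rw [show ((1 : Mat n) ⊗ₖ J) * krA A (1 : Matrix (Fin s) (Fin s) ℂ) * ((1 : Mat n) ⊗ₖ K)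
      = ((1 : Mat n) ⊗ₖ J) * (krA A (1 : Matrix (Fin s) (Fin s) ℂ) * ((1 : Mat n) ⊗ₖ K)) from
      Matrix.mul_assoc _ _ _]
  rw [left_tw', Matrix.mul_assoc J, Matrix.mul_assoc ((boomAmp n s)ᵀ), right_tw']
  simp only [Matrix.mul_assoc]
end
end
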